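/- Let λ be a Borel measure on ℝ^{n+2} that is invariant under g_t for every t ∈ ℝ and is finite on compact sets. Then for every c > 0 and every Borel set A ⊆ S^{n−1}, λ(E_{T,c,A})/T → λ(F_{1,c,A}) as T → ∞ (limit in the extended nonnegative reals). -/

import Mathlib

noncomputable section

open MeasureTheory Metric Filter Topology
open scoped ENNReal

/-- The index of the coordinate `x_{n+2}` (0-indexed: `n+1`). -/
def lastC (n : ℕ) : Fin (n + 2) := Fin.last (n + 1)

/-- The index of the coordinate `x_{n+1}` (0-indexed: `n`). -/
def sndC (n : ℕ) : Fin (n + 2) := ⟨n, by omega⟩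

/-- The quadratic form `Q(x) = x_1² + ⋯ + x_{n+1}² − x_{n+2}²`. -/
def Qf (n : ℕ) (x : EuclideanSpace ℝ (Fin (n + 2))) : ℝ :=
  (∑ i : Fin (n + 1), x (Fin.castSucc i) ^ 2) - x (lastC n) ^ 2

/-- The positive light cone. -/
def lightCone (n : ℕ) : Set (EuclideanSpace ℝ (Fin (n + 2))) :=
  {x | Qf n x = 0 ∧ 0 ≤ x (lastC n)}

/-- `Λ₀`: the intersection of the light cone with `ℤ^{n+1} × ℤ_{>0}`. -/
def Lat0 (n : ℕ) : Set (EuclideanSpace ℝ (Fin (n + 2))) :=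
  {x | x ∈ lightCone n ∧ (∀ i, ∃ m : ℤ, x i = (m : ℝ)) ∧ 0 < x (lastC n)}

/-- The set `F_{T,c}`. -/
def Fset (n : ℕ) (T c : ℝ) : Set (EuclideanSpace ℝ (Fin (n + 2))) :=
  {x | x ∈ lightCone n ∧ x (lastC n) ^ 2 - x (sndC n) ^ 2 < c ^ 2 ∧
    1 ≤ x (sndC n) + x (lastC n) ∧ x (sndC n) + x (lastC n) < Real.exp T}

/-- The set `E_{T,c}`. -/
def Eset (n : ℕ) (T c : ℝ) : Set (EuclideanSpace ℝ (Fin (n + 2))) :=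
  {x | x ∈ lightCone n ∧ 2 * x (lastC n) * (x (lastC n) - x (sndC n)) < c ^ 2 ∧
    1 ≤ x (lastC n) ∧ x (lastC n) < Real.cosh T}

/-- The first `n+1` coordinates of a point of `ℝ^{n+2}`. -/
def firstPart (n : ℕ) (x : EuclideanSpace ℝ (Fin (n + 2))) : EuclideanSpace ℝ (Fin (n + 1)) :=
  WithLp.toLp 2 (fun i => x (Fin.castSucc i))

/-- The first `n` coordinates of a point of `ℝ^{n+2}`. -/
def headN (n : ℕ) (x : EuclideanSpace ℝ (Fin (n + 2))) : EuclideanSpace ℝ (Fin n) :=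
  WithLp.toLp 2 (fun (i : Fin n) => x (Fin.castLE (by omega) i))

/-- The direction map `π(x) = (x_1,…,x_n)/‖(x_1,…,x_n)‖`. -/
def dir (n : ℕ) (x : EuclideanSpace ℝ (Fin (n + 2))) : EuclideanSpace ℝ (Fin n) :=
  ‖headN n x‖⁻¹ • headN n x

/-- The one-parameter diagonal flow `g_t`. -/
def gmap (n : ℕ) (t : ℝ) (x : EuclideanSpace ℝ (Fin (n + 2))) :
    EuclideanSpace ℝ (Fin (n + 2)) :=
  WithLp.toLp 2 fun i =>
    if i = sndC n then Real.cosh t * x (sndC n) - Real.sinh t * x (lastC n)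
    else if i = lastC n then - Real.sinh t * x (sndC n) + Real.cosh t * x (lastC n)
    else x i

/-- The set `F_{T,c,A}`. -/
def FsetA (n : ℕ) (T c : ℝ) (A : Set ↑(sphere (0 : EuclideanSpace ℝ (Fin n)) 1)) :
    Set (EuclideanSpace ℝ (Fin (n + 2))) :=
  {x | x ∈ Fset n T c ∧ headN n x ≠ 0 ∧ dir n x ∈ Subtype.val '' A}

/-- The set `E_{T,c,A}`. -/
def EsetA (n : ℕ) (T c : ℝ) (A : Set ↑(sphere (0 : EuclideanSpace ℝ (Fin n)) 1)) :
    Set (EuclideanSpace ℝ (Fin (n + 2))) :=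
  {x | x ∈ Eset n T c ∧ headN n x ≠ 0 ∧ dir n x ∈ Subtype.val '' A}

namespace LA

variable {n : ℕ}

def uu (n : ℕ) (x : EuclideanSpace ℝ (Fin (n+2))) : ℝ := x (sndC n) + x (lastC n)
def vv (n : ℕ) (x : EuclideanSpace ℝ (Fin (n+2))) : ℝ := x (lastC n) - x (sndC n)

lemma sndC_ne_lastC : sndC n ≠ lastC n := by
  simp [sndC, lastC, Fin.ext_iff]

lemma gmap_sndC (t : ℝ) (x : EuclideanSpace ℝ (Fin (n+2))) :
    gmap n t x (sndC n) = Real.cosh t * x (sndC n) - Real.sinh t * x (lastC n) := by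
  simp [gmap]

lemma gmap_lastC (t : ℝ) (x : EuclideanSpace ℝ (Fin (n+2))) :
    gmap n t x (lastC n) = - Real.sinh t * x (sndC n) + Real.cosh t * x (lastC n) := by
  simp [gmap, sndC_ne_lastC.symm]

lemma castLE_ne_sndC (i : Fin n) : (Fin.castLE (by omega) i : Fin (n+2)) ≠ sndC n := by
  simp [sndC, Fin.ext_iff]; omega

lemma castLE_ne_lastC (i : Fin n) : (Fin.castLE (by omega) i : Fin (n+2)) ≠ lastC n := by
  simp [lastC, Fin.ext_iff]; omega

lemma headN_gmap (t : ℝ) (x : EuclideanSpace ℝ (Fin (n+2))) :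
    headN n (gmap n t x) = headN n x := by
  ext i
  simp [headN, gmap, castLE_ne_sndC i, castLE_ne_lastC i]

lemma uu_gmap (t : ℝ) (x : EuclideanSpace ℝ (Fin (n+2))) :
    uu n (gmap n t x) = Real.exp (-t) * uu n x := by
  simp only [uu, gmap_sndC, gmap_lastC]
  rw [← Real.cosh_sub_sinh]
  ring

lemma vv_gmap (t : ℝ) (x : EuclideanSpace ℝ (Fin (n+2))) :
    vv n (gmap n t x) = Real.exp t * vv n x := by
  simp only [vv, gmap_sndC, gmap_lastC]
  rw [← Real.cosh_add_sinh]
  ring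

lemma sum_sq_split (x : EuclideanSpace ℝ (Fin (n+2))) :
    ∑ i : Fin (n + 1), x (Fin.castSucc i) ^ 2
      = (∑ i : Fin n, (headN n x i) ^ 2) + x (sndC n) ^ 2 := by
  rw [Fin.sum_univ_castSucc (f := fun i : Fin (n+1) => x (Fin.castSucc i) ^ 2)]
  rfl

lemma Qf_gmap (t : ℝ) (x : EuclideanSpace ℝ (Fin (n+2))) :
    Qf n (gmap n t x) = Qf n x := by
  unfold Qf
  rw [sum_sq_split, sum_sq_split, headN_gmap, gmap_sndC, gmap_lastC]
  nlinarith [Real.cosh_sq_sub_sinh_sq t]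


variable {n : ℕ}

-- cone facts
lemma sq_snd_le (x : EuclideanSpace ℝ (Fin (n+2))) (hx : x ∈ lightCone n) :
    x (sndC n) ^ 2 ≤ x (lastC n) ^ 2 := by
  have h1 := hx.1
  unfold Qf at h1
  rw [sum_sq_split] at h1
  have : (0:ℝ) ≤ ∑ i : Fin n, (headN n x i) ^ 2 :=
    Finset.sum_nonneg fun i _ => sq_nonneg _
  linarith

lemma uu_nonneg (x : EuclideanSpace ℝ (Fin (n+2))) (hx : x ∈ lightCone n) : 0 ≤ uu n x := by
  have := sq_snd_le x hx; have := hx.2; unfold uu; nlinarith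

lemma vv_nonneg (x : EuclideanSpace ℝ (Fin (n+2))) (hx : x ∈ lightCone n) : 0 ≤ vv n x := by
  have := sq_snd_le x hx; have := hx.2; unfold vv; nlinarith

lemma headN_sq (x : EuclideanSpace ℝ (Fin (n+2))) (hx : x ∈ lightCone n) :
    ∑ i : Fin n, (headN n x i) ^ 2 = uu n x * vv n x := by
  have h1 := hx.1
  unfold Qf at h1
  rw [sum_sq_split] at h1
  unfold uu vv; nlinarith

lemma norm_le_of_mem (x : EuclideanSpace ℝ (Fin (n+2))) (hx : x ∈ lightCone n)
    {M : ℝ} (hM : 0 ≤ M) (h1 : uu n x ≤ M) (h2 : vv n x ≤ M) : ‖x‖ ≤ 2 * M := by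
  rw [EuclideanSpace.norm_eq]
  rw [show (2*M) = Real.sqrt ((2*M)^2) from (Real.sqrt_sq (by positivity)).symm]
  apply Real.sqrt_le_sqrt
  have hsplit : ∑ i : Fin (n+2), x i ^ 2
      = (∑ i : Fin (n+1), x (Fin.castSucc i) ^ 2) + x (lastC n) ^ 2 := by
    rw [Fin.sum_univ_castSucc (f := fun i : Fin (n+2) => x i ^ 2)]; rfl
  have h3 : ∑ i : Fin (n+2), x i ^ 2 = 2 * x (lastC n) ^ 2 := by
    rw [hsplit]
    have := hx.1; unfold Qf at this; linarith
  have hl : x (lastC n) = (uu n x + vv n x) / 2 := by unfold uu vv; ring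
  have := uu_nonneg x hx
  have := vv_nonneg x hx
  calc ∑ i : Fin (n+2), (‖x i‖ : ℝ) ^ 2 = ∑ i : Fin (n+2), x i ^ 2 := by
        apply Finset.sum_congr rfl; intro i _; rw [Real.norm_eq_abs, sq_abs]
    _ ≤ (2*M)^2 := by rw [h3, hl]; nlinarith

-- continuity / measurability
lemma continuous_eval {m : ℕ} (i : Fin m) :
    Continuous (fun x : EuclideanSpace ℝ (Fin m) => x i) :=
  (EuclideanSpace.proj i).continuous

lemma continuous_headN : Continuous (headN n) := by
  have h : Continuous fun x : EuclideanSpace ℝ (Fin (n+2)) =>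
      (EuclideanSpace.equiv (Fin n) ℝ).symm (fun i => x (Fin.castLE (by omega) i)) :=
    (EuclideanSpace.equiv (Fin n) ℝ).symm.continuous.comp
      (continuous_pi fun i => continuous_eval _)
  exact h

lemma continuous_gmap (t : ℝ) : Continuous (gmap n t) := by
  have h : Continuous fun x : EuclideanSpace ℝ (Fin (n+2)) =>
      (EuclideanSpace.equiv (Fin (n+2)) ℝ).symm
      (fun i => if i = sndC n then Real.cosh t * x (sndC n) - Real.sinh t * x (lastC n)
        else if i = lastC n then - Real.sinh t * x (sndC n) + Real.cosh t * x (lastC n)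
        else x i) := by
    apply (EuclideanSpace.equiv (Fin (n+2)) ℝ).symm.continuous.comp
    apply continuous_pi
    intro i
    split_ifs
    · exact ((continuous_const.mul (continuous_eval _)).sub
        (continuous_const.mul (continuous_eval _)))
    · exact ((continuous_const.mul (continuous_eval _)).add
        (continuous_const.mul (continuous_eval _)))
    · exact continuous_eval _
  exact h

lemma measurable_dir : Measurable (dir n) := by
  unfold dir
  exact ((continuous_headN.norm.measurable).inv).smul continuous_headN.measurable

lemma measurableSet_lightCone : MeasurableSet (lightCone n) := by
  have hq : Continuous (Qf n) := by
    unfold Qf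
    apply Continuous.sub
    · exact continuous_finset_sum _ fun i _ => (continuous_eval _).pow 2
    · exact (continuous_eval _).pow 2
  exact (isClosed_eq hq continuous_const).measurableSet.inter
    (isClosed_le continuous_const (continuous_eval _)).measurableSet

lemma measurable_uuvv : Measurable (fun x => (uu n x, vv n x)) := by
  exact (((continuous_eval (sndC n)).add (continuous_eval (lastC n))).prodMk
    ((continuous_eval (lastC n)).sub (continuous_eval (sndC n)))).measurable

end LA
namespace LA2
open LA Real

variable {n : ℕ} {A : Set ↑(Metric.sphere (0 : EuclideanSpace ℝ (Fin n)) 1)}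

def G (n : ℕ) (A : Set ↑(Metric.sphere (0 : EuclideanSpace ℝ (Fin n)) 1))
    (s : Set (ℝ × ℝ)) : Set (EuclideanSpace ℝ (Fin (n+2))) :=
  {x | x ∈ lightCone n ∧ headN n x ≠ 0 ∧ dir n x ∈ Subtype.val '' A ∧ (uu n x, vv n x) ∈ s}

def scale (t : ℝ) (s : Set (ℝ × ℝ)) : Set (ℝ × ℝ) :=
  (fun p : ℝ × ℝ => (Real.exp (-t) * p.1, Real.exp t * p.2)) ⁻¹' s

lemma G_mono {s s' : Set (ℝ × ℝ)} (h : s ⊆ s') : G n A s ⊆ G n A s' :=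
  fun x hx => ⟨hx.1, hx.2.1, hx.2.2.1, h hx.2.2.2⟩

lemma G_subset_of_Q {s s' : Set (ℝ × ℝ)}
    (h : ∀ p : ℝ × ℝ, 0 ≤ p.1 → 0 ≤ p.2 → p ∈ s → p ∈ s') : G n A s ⊆ G n A s' :=
  fun x hx => ⟨hx.1, hx.2.1, hx.2.2.1,
    h _ (uu_nonneg x hx.1) (vv_nonneg x hx.1) hx.2.2.2⟩

lemma G_meas (hA : MeasurableSet A) {s : Set (ℝ × ℝ)} (hs : MeasurableSet s) :
    MeasurableSet (G n A s) := by
  have h1 : MeasurableSet {x : EuclideanSpace ℝ (Fin (n+2)) | headN n x ≠ 0} :=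
    (isClosed_eq continuous_headN continuous_const).measurableSet.compl
  have h2 : MeasurableSet (dir n ⁻¹' (Subtype.val '' A)) :=
    measurable_dir (MeasurableSet.subtype_image
      (Metric.isClosed_sphere).measurableSet hA)
  have h3 : MeasurableSet ((fun x => (uu n x, vv n x)) ⁻¹' s) := measurable_uuvv hs
  have hG : G n A s = ((lightCone n ∩ {x | headN n x ≠ 0}) ∩ dir n ⁻¹' (Subtype.val '' A))
      ∩ (fun x => (uu n x, vv n x)) ⁻¹' s := by
    ext x; simp only [G, Set.mem_setOf_eq, Set.mem_inter_iff, Set.mem_preimage]; tauto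
  rw [hG]
  exact ((measurableSet_lightCone.inter h1).inter h2).inter h3

lemma gmap_gmap (s t : ℝ) (x : EuclideanSpace ℝ (Fin (n+2))) :
    gmap n s (gmap n t x) = gmap n (s + t) x := by
  ext i
  by_cases h1 : i = sndC n
  · subst h1
    rw [gmap_sndC, gmap_sndC, gmap_lastC, gmap_sndC, Real.cosh_add, Real.sinh_add]
    ring
  · by_cases h2 : i = lastC n
    · subst h2
      rw [gmap_lastC, gmap_lastC, gmap_sndC, gmap_lastC, Real.cosh_add, Real.sinh_add]
      ring
    · simp [gmap, h1, h2]

lemma gmap_zero (x : EuclideanSpace ℝ (Fin (n+2))) : gmap n 0 x = x := by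
  ext i
  by_cases h1 : i = sndC n
  · subst h1; rw [gmap_sndC]; simp
  · by_cases h2 : i = lastC n
    · subst h2; rw [gmap_lastC]; simp
    · simp [gmap, h1, h2]

lemma lightCone_gmap (t : ℝ) (x : EuclideanSpace ℝ (Fin (n+2))) :
    gmap n t x ∈ lightCone n ↔ x ∈ lightCone n := by
  have key : ∀ (s : ℝ) (y : EuclideanSpace ℝ (Fin (n+2))),
      y ∈ lightCone n → gmap n s y ∈ lightCone n := by
    intro s y hy
    constructor
    · rw [Qf_gmap]; exact hy.1
    · have h1 : gmap n s y (lastC n) = (uu n (gmap n s y) + vv n (gmap n s y)) / 2 := by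
        unfold uu vv; ring
      rw [h1, uu_gmap, vv_gmap]
      have := uu_nonneg y hy
      have := vv_nonneg y hy
      have e1 := Real.exp_nonneg (-s)
      have e2 := Real.exp_nonneg s
      positivity
  constructor
  · intro h
    have := key (-t) _ h
    rwa [gmap_gmap, neg_add_cancel, gmap_zero] at this
  · exact key t x

lemma dir_gmap (t : ℝ) (x : EuclideanSpace ℝ (Fin (n+2))) : dir n (gmap n t x) = dir n x := by
  unfold dir; rw [headN_gmap]

lemma gmap_preimage_G (t : ℝ) (s : Set (ℝ × ℝ)) :
    (gmap n t) ⁻¹' (G n A s) = G n A (scale t s) := by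
  ext x
  simp only [G, scale, Set.mem_preimage, Set.mem_setOf_eq, lightCone_gmap, dir_gmap,
    headN_gmap, uu_gmap, vv_gmap]

variable (lam : MeasureTheory.Measure (EuclideanSpace ℝ (Fin (n+2))))

lemma lam_G_scale (hinv : ∀ t : ℝ, MeasureTheory.Measure.map (gmap n t) lam = lam)
    (hA : MeasurableSet A) (t : ℝ) {s : Set (ℝ × ℝ)} (hs : MeasurableSet s) :
    lam (G n A (scale t s)) = lam (G n A s) := by
  rw [← gmap_preimage_G]
  rw [← MeasureTheory.Measure.map_apply (continuous_gmap t).measurable (G_meas hA hs)]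
  rw [hinv t]

lemma lam_G_finite (hfc : MeasureTheory.IsFiniteMeasureOnCompacts lam)
    {s : Set (ℝ × ℝ)} {M : ℝ} (hM : 0 ≤ M)
    (hb : ∀ p : ℝ × ℝ, p ∈ s → 0 ≤ p.1 → 0 ≤ p.2 → p.1 ≤ M ∧ p.2 ≤ M) :
    lam (G n A s) ≠ ⊤ := by
  have hsub : G n A s ⊆ Metric.closedBall 0 (2*M) := by
    intro x hx
    rw [Metric.mem_closedBall, dist_zero_right]
    have h1 := uu_nonneg x hx.1
    have h2 := vv_nonneg x hx.1
    obtain ⟨hu, hv⟩ := hb _ hx.2.2.2 h1 h2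
    exact norm_le_of_mem x hx.1 hM hu hv
  exact ne_top_of_le_ne_top
    ((isCompact_closedBall 0 (2*M)).measure_lt_top).ne
    (MeasureTheory.measure_mono hsub)

lemma G_union (s t : Set (ℝ × ℝ)) : G n A (s ∪ t) = G n A s ∪ G n A t := by
  ext x; simp only [G, Set.mem_setOf_eq, Set.mem_union]; tauto

lemma G_disjoint {s t : Set (ℝ × ℝ)} (h : Disjoint s t) : Disjoint (G n A s) (G n A t) := by
  rw [Set.disjoint_left] at h ⊢
  intro x hx hx'
  exact h hx.2.2.2 hx'.2.2.2

lemma lam_G_union (hA : MeasurableSet A) {s t : Set (ℝ × ℝ)} (hs : MeasurableSet s)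
    (ht : MeasurableSet t) (hd : Disjoint s t) :
    lam (G n A (s ∪ t)) = lam (G n A s) + lam (G n A t) := by
  rw [G_union]
  exact MeasureTheory.measure_union (G_disjoint hd) (G_meas hA ht)

end LA2
namespace LA3
open LA LA2 Real MeasureTheory

variable {n : ℕ} {A : Set ↑(Metric.sphere (0 : EuclideanSpace ℝ (Fin n)) 1)} {c : ℝ}

def sl (c a b : ℝ) : Set (ℝ × ℝ) := {p | p.1 * p.2 < c^2 ∧ a ≤ p.1 ∧ p.1 < b}

def sE (c T : ℝ) : Set (ℝ × ℝ) :=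
  {p | (p.1 + p.2) * p.2 < c^2 ∧ 2 ≤ p.1 + p.2 ∧ p.1 + p.2 < 2 * Real.cosh T}

def Box (a b : ℝ) : Set (ℝ × ℝ) := {p | 0 ≤ p.1 ∧ p.1 ≤ a ∧ 0 ≤ p.2 ∧ p.2 ≤ b}

def Sh (c ε : ℝ) : Set (ℝ × ℝ) :=
  {p | 1 ≤ p.1 ∧ p.1 < Real.exp 1 ∧ c^2 - ε ≤ p.1 * p.2 ∧ p.1 * p.2 < c^2 ∧ 0 ≤ p.2}

lemma sl_meas (c a b : ℝ) : MeasurableSet (sl c a b) := by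
  unfold sl
  rw [Set.setOf_and, Set.setOf_and]
  exact (measurableSet_lt (measurable_fst.mul measurable_snd) measurable_const).inter
    ((measurableSet_le measurable_const measurable_fst).inter
      (measurableSet_lt measurable_fst measurable_const))

lemma sE_meas (c T : ℝ) : MeasurableSet (sE c T) := by
  unfold sE
  rw [Set.setOf_and, Set.setOf_and]
  exact (measurableSet_lt ((measurable_fst.add measurable_snd).mul measurable_snd)
      measurable_const).inter
    ((measurableSet_le measurable_const (measurable_fst.add measurable_snd)).inter
      (measurableSet_lt (measurable_fst.add measurable_snd) measurable_const))

lemma Box_meas (a b : ℝ) : MeasurableSet (Box a b) := by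
  unfold Box
  rw [Set.setOf_and, Set.setOf_and, Set.setOf_and]
  exact (measurableSet_le measurable_const measurable_fst).inter
    ((measurableSet_le measurable_fst measurable_const).inter
      ((measurableSet_le measurable_const measurable_snd).inter
        (measurableSet_le measurable_snd measurable_const)))

lemma Sh_meas (c ε : ℝ) : MeasurableSet (Sh c ε) := by
  unfold Sh
  rw [Set.setOf_and, Set.setOf_and, Set.setOf_and, Set.setOf_and]
  exact (measurableSet_le measurable_const measurable_fst).inter
    ((measurableSet_lt measurable_fst measurable_const).inter
      ((measurableSet_le measurable_const (measurable_fst.mul measurable_snd)).inter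
        ((measurableSet_lt (measurable_fst.mul measurable_snd) measurable_const).inter
          (measurableSet_le measurable_const measurable_snd))))

lemma scale_meas (t : ℝ) {s : Set (ℝ × ℝ)} (hs : MeasurableSet s) :
    MeasurableSet (scale t s) :=
  ((continuous_const.mul continuous_fst).prodMk
    (continuous_const.mul continuous_snd)).measurable hs

lemma scale_sl (t a b : ℝ) :
    scale t (sl c a b) = sl c (Real.exp t * a) (Real.exp t * b) := by
  have hme : Real.exp (-t) * Real.exp t = 1 := by rw [← Real.exp_add]; simp
  have hpos := Real.exp_pos t
  have hpos' := Real.exp_pos (-t)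
  have key : ∀ x : ℝ, Real.exp t * (Real.exp (-t) * x) = x := fun x => by
    rw [← mul_assoc, ← Real.exp_add]; simp
  have key' : ∀ x : ℝ, Real.exp (-t) * (Real.exp t * x) = x := fun x => by
    rw [← mul_assoc, ← Real.exp_add]; simp
  ext ⟨p1, p2⟩
  simp only [scale, sl, Set.mem_preimage, Set.mem_setOf_eq]
  have hprod : Real.exp (-t) * p1 * (Real.exp t * p2) = p1 * p2 := by
    linear_combination (p1 * p2) * hme
  constructor
  · rintro ⟨h1, h2, h3⟩
    rw [hprod] at h1
    refine ⟨h1, ?_, ?_⟩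
    · have h4 := mul_le_mul_of_nonneg_left h2 hpos.le
      rwa [key] at h4
    · have h4 := mul_lt_mul_of_pos_left h3 hpos
      rwa [key] at h4
  · rintro ⟨h1, h2, h3⟩
    rw [hprod]
    refine ⟨h1, ?_, ?_⟩
    · have h4 := mul_le_mul_of_nonneg_left h2 hpos'.le
      rwa [key'] at h4
    · have h4 := mul_lt_mul_of_pos_left h3 hpos'
      rwa [key'] at h4

/-- the FsetA sets in terms of `G`. -/
lemma FsetA_eq (T : ℝ) : FsetA n T c A = G n A (sl c 1 (Real.exp T)) := by
  ext x
  simp only [FsetA, Fset, G, sl, Set.mem_setOf_eq]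
  unfold LA.uu LA.vv
  constructor
  · rintro ⟨⟨hcone, h1, h2, h3⟩, hh, hd⟩
    exact ⟨hcone, hh, hd, by nlinarith, h2, h3⟩
  · rintro ⟨hcone, hh, hd, h1, h2, h3⟩
    exact ⟨⟨hcone, by nlinarith, h2, h3⟩, hh, hd⟩

lemma EsetA_eq (T : ℝ) : EsetA n T c A = G n A (sE c T) := by
  ext x
  simp only [EsetA, Eset, G, sE, Set.mem_setOf_eq]
  unfold LA.uu LA.vv
  constructor
  · rintro ⟨⟨hcone, h1, h2, h3⟩, hh, hd⟩
    exact ⟨hcone, hh, hd, by nlinarith, by linarith, by linarith⟩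
  · rintro ⟨hcone, hh, hd, h1, h2, h3⟩
    exact ⟨⟨hcone, by nlinarith, by linarith, by linarith⟩, hh, hd⟩

/-- E-side inclusion. -/
lemma incl_E (hc : 0 < c) {T : ℝ} (hT : 1 ≤ T) :
    ∀ p : ℝ × ℝ, 0 ≤ p.1 → 0 ≤ p.2 → p ∈ sE c T →
      p ∈ (sl c 1 (Real.exp T) ∪ Box 1 c) ∪ scale T (Box 2 (c^2)) := by
  rintro ⟨a, b⟩ ha hb ⟨h1, h2, h3⟩
  dsimp only at ha hb h1 h2 h3
  have hcosh : 2 * Real.cosh T = Real.exp T + Real.exp (-T) := by rw [Real.cosh_eq]; ring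
  have hme : Real.exp (-T) * Real.exp T = 1 := by rw [← Real.exp_add]; simp
  have hpos := Real.exp_pos T
  have hpos' := Real.exp_pos (-T)
  have heT : 1 ≤ Real.exp T := by
    have := Real.add_one_le_exp T; linarith
  have heT' : Real.exp (-T) ≤ 1 := by nlinarith
  rcases lt_or_ge a 1 with h4 | h4
  · exact Or.inl (Or.inr ⟨ha, le_of_lt h4, hb, by nlinarith⟩)
  rcases lt_or_ge a (Real.exp T) with h5 | h5
  · exact Or.inl (Or.inl ⟨by nlinarith, h4, h5⟩)
  · refine Or.inr ⟨?_, ?_, ?_, ?_⟩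
    · show (0:ℝ) ≤ Real.exp (-T) * a
      positivity
    · show Real.exp (-T) * a ≤ 2
      have h6 : a < 2 * Real.exp T := by nlinarith
      nlinarith
    · show (0:ℝ) ≤ Real.exp T * b
      positivity
    · show Real.exp T * b ≤ c^2
      nlinarith

set_option maxHeartbeats 1000000 in
lemma incl_F (hc : 0 < c) {T : ℝ} (hT : 1 ≤ T) (hT2 : 2 * c^2 ≤ Real.exp T) :
    ∀ p : ℝ × ℝ, 0 ≤ p.1 → 0 ≤ p.2 → p ∈ sl c 1 (Real.exp T) →
      p ∈ ((sE c T ∪ Box 2 2) ∪ scale T (Box 1 (2 * c^2))) ∪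
        ⋃ k ∈ Finset.range (⌊T⌋₊ + 1), scale (k : ℝ) (Sh c (c^4 * Real.exp (-2 * (k : ℝ)))) := by
  rintro ⟨a, b⟩ ha hb ⟨h1, h2, h3⟩
  dsimp only at ha hb h1 h2 h3
  have hcosh : 2 * Real.cosh T = Real.exp T + Real.exp (-T) := by rw [Real.cosh_eq]; ring
  have hme : Real.exp (-T) * Real.exp T = 1 := by rw [← Real.exp_add]; simp
  have hpos := Real.exp_pos T
  have hpos' := Real.exp_pos (-T)
  have heT : 1 ≤ Real.exp T := by have := Real.add_one_le_exp T; linarith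
  have heT' : Real.exp (-T) ≤ 1 := by nlinarith
  rcases lt_or_ge ((a + b) * b) (c^2) with hs | hs
  · -- not in shell
    rcases lt_or_ge (a + b) 2 with h4 | h4
    · exact Or.inl (Or.inl (Or.inr ⟨ha, by linarith, hb, by linarith⟩))
    rcases lt_or_ge (a + b) (2 * Real.cosh T) with h5 | h5
    · exact Or.inl (Or.inl (Or.inl ⟨hs, h4, h5⟩))
    · -- a+b ≥ e^T + e^{-T}
      refine Or.inl (Or.inr ⟨?_, ?_, ?_, ?_⟩)
      · show (0:ℝ) ≤ Real.exp (-T) * a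
        positivity
      · show Real.exp (-T) * a ≤ 1
        nlinarith
      · show (0:ℝ) ≤ Real.exp T * b
        positivity
      · show Real.exp T * b ≤ 2 * c^2
        have hblec : b ≤ c^2 := by nlinarith
        have hage : Real.exp T - c^2 ≤ a := by nlinarith
        have hage2 : Real.exp T ≤ 2 * a := by nlinarith
        nlinarith
  · -- shell case
    obtain ⟨k, hkle, hamem, hamem2⟩ : ∃ k : ℕ, k ≤ ⌊T⌋₊ ∧ Real.exp (k:ℝ) ≤ a ∧
        a < Real.exp ((k : ℝ) + 1) := by
      refine ⟨⌊Real.log a⌋₊, ?_, ?_, ?_⟩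
      · have h6 : (⌊Real.log a⌋₊ : ℝ) ≤ Real.log a := Nat.floor_le (Real.log_nonneg h2)
        have hloglt : Real.log a < T := by
          by_contra hcon
          push_neg at hcon
          have h7 := Real.exp_le_exp.mpr hcon
          rw [Real.exp_log (by linarith : (0:ℝ) < a)] at h7
          linarith
        exact Nat.le_floor (le_of_lt (lt_of_le_of_lt h6 hloglt))
      · have h8 := Real.exp_le_exp.mpr (Nat.floor_le (Real.log_nonneg h2))
        rwa [Real.exp_log (by linarith : (0:ℝ) < a)] at h8
      · have h8 := Real.exp_lt_exp.mpr (Nat.lt_floor_add_one (Real.log a))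
        rwa [Real.exp_log (by linarith : (0:ℝ) < a)] at h8
    refine Or.inr ?_
    refine Set.mem_iUnion₂.mpr ⟨k, by simp only [Finset.mem_range]; omega, ?_⟩
    have hpk := Real.exp_pos (k : ℝ)
    have hpk' := Real.exp_pos (-(k : ℝ))
    have hmek : Real.exp (-(k:ℝ)) * Real.exp (k:ℝ) = 1 := by rw [← Real.exp_add]; simp
    have hE2 : Real.exp (-2 * (k:ℝ)) * (Real.exp (k:ℝ) * Real.exp (k:ℝ)) = 1 := by
      rw [← Real.exp_add, ← Real.exp_add, ← Real.exp_zero]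
      congr 1
      ring
    have hexp1 : Real.exp ((k:ℝ) + 1) = Real.exp (k:ℝ) * Real.exp 1 := Real.exp_add _ _
    have hmem : ((Real.exp (-(k:ℝ)) * a, Real.exp (k:ℝ) * b) : ℝ × ℝ) ∈
        Sh c (c^4 * Real.exp (-2 * (k:ℝ))) := by
      have hprod : (Real.exp (-(k:ℝ)) * a) * (Real.exp (k:ℝ) * b) = a * b := by
        linear_combination (a * b) * hmek
      refine ⟨?_, ?_, ?_, ?_, ?_⟩
      · show (1:ℝ) ≤ Real.exp (-(k:ℝ)) * a
        have h8 := mul_le_mul_of_nonneg_left hamem hpk'.le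
        rwa [hmek] at h8
      · show Real.exp (-(k:ℝ)) * a < Real.exp 1
        rw [hexp1] at hamem2
        have h8 := mul_lt_mul_of_pos_left hamem2 hpk'
        rwa [← mul_assoc, hmek, one_mul] at h8
      · show c^2 - c^4 * Real.exp (-2 * (k:ℝ)) ≤ (Real.exp (-(k:ℝ)) * a) * (Real.exp (k:ℝ) * b)
        rw [hprod]
        have hbe : b * Real.exp (k:ℝ) ≤ b * a := mul_le_mul_of_nonneg_left hamem hb
        have hbe2 : b * Real.exp (k:ℝ) < c^2 := by nlinarith [h1]
        have hbe0 : 0 ≤ b * Real.exp (k:ℝ) := by positivity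
        have hbe3 : (b * Real.exp (k:ℝ))^2 ≤ c^4 := by nlinarith [hbe0, hbe2]
        have hbsq : b^2 = (b * Real.exp (k:ℝ))^2 * Real.exp (-2 * (k:ℝ)) := by
          linear_combination (-(b^2)) * hE2
        have hb4 : b^2 ≤ c^4 * Real.exp (-2 * (k:ℝ)) := by
          rw [hbsq]
          exact mul_le_mul_of_nonneg_right hbe3 (Real.exp_nonneg _)
        nlinarith [hs, hb4]
      · show (Real.exp (-(k:ℝ)) * a) * (Real.exp (k:ℝ) * b) < c^2
        rw [hprod]; exact h1
      · show (0:ℝ) ≤ Real.exp (k:ℝ) * b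
        positivity
    exact hmem

end LA3
namespace LA4
open LA LA2 LA3 Real MeasureTheory Filter Topology
open scoped ENNReal

variable {n : ℕ} {A : Set ↑(Metric.sphere (0 : EuclideanSpace ℝ (Fin n)) 1)} {c : ℝ}
variable (lam : MeasureTheory.Measure (EuclideanSpace ℝ (Fin (n+2))))

lemma G_empty : G n A (∅ : Set (ℝ × ℝ)) = ∅ := by
  ext x; simp [G]

lemma lam_sl (hinv : ∀ t : ℝ, MeasureTheory.Measure.map (gmap n t) lam = lam)
    (hA : MeasurableSet A) (m : ℕ) :
    lam (G n A (sl c 1 (Real.exp (m : ℝ)))) = (m : ℝ≥0∞) * lam (G n A (sl c 1 (Real.exp 1))) := by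
  induction m with
  | zero =>
    have h0 : sl c 1 (Real.exp (0:ℝ)) = (∅ : Set (ℝ × ℝ)) := by
      ext ⟨p1, p2⟩
      simp only [sl, Real.exp_zero, Set.mem_setOf_eq, Set.mem_empty_iff_false, iff_false,
        not_and, not_lt]
      intro _ h2
      linarith
    rw [Nat.cast_zero, h0, G_empty]
    simp
  | succ m ih =>
    have hone : (1:ℝ) ≤ Real.exp (m : ℝ) := Real.one_le_exp (by positivity)
    have hsplit : sl c 1 (Real.exp ((m+1 : ℕ) : ℝ))
        = sl c 1 (Real.exp (m:ℝ)) ∪ sl c (Real.exp (m:ℝ)) (Real.exp ((m+1 : ℕ) : ℝ)) := by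
      ext ⟨p1, p2⟩
      simp only [sl, Set.mem_setOf_eq, Set.mem_union]
      constructor
      · rintro ⟨h1, h2, h3⟩
        rcases lt_or_ge p1 (Real.exp (m:ℝ)) with h4 | h4
        · exact Or.inl ⟨h1, h2, h4⟩
        · exact Or.inr ⟨h1, h4, h3⟩
      · rintro (⟨h1, h2, h3⟩ | ⟨h1, h2, h3⟩)
        · refine ⟨h1, h2, lt_of_lt_of_le h3 (Real.exp_le_exp.mpr ?_)⟩
          push_cast; linarith
        · exact ⟨h1, le_trans hone h2, h3⟩
    have hd : Disjoint (sl c 1 (Real.exp (m:ℝ)))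
        (sl c (Real.exp (m:ℝ)) (Real.exp ((m+1 : ℕ) : ℝ))) := by
      rw [Set.disjoint_left]
      rintro ⟨p1, p2⟩ ⟨_, _, h3⟩ ⟨_, h4, _⟩
      exact absurd h4 (not_le.mpr h3)
    have hscale : sl c (Real.exp (m:ℝ)) (Real.exp ((m+1 : ℕ) : ℝ))
        = scale (m:ℝ) (sl c 1 (Real.exp 1)) := by
      rw [scale_sl, mul_one, ← Real.exp_add]
      norm_num
    rw [hsplit, lam_G_union lam hA (sl_meas c _ _) (sl_meas c _ _) hd, ih, hscale,
      lam_G_scale lam hinv hA _ (sl_meas c _ _)]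
    push_cast
    ring

lemma L_ne_top (hc : 0 < c) (hfc : MeasureTheory.IsFiniteMeasureOnCompacts lam) :
    lam (G n A (sl c 1 (Real.exp 1))) ≠ ⊤ := by
  refine lam_G_finite lam hfc (M := max (Real.exp 1) (c^2)) ?_ ?_
  · exact le_trans (Real.exp_nonneg 1) (le_max_left _ _)
  · rintro ⟨p1, p2⟩ ⟨h1, h2, h3⟩ _ hp2
    dsimp only at *
    constructor
    · exact le_trans h3.le (le_max_left _ _)
    · refine le_trans ?_ (le_max_right _ _)
      nlinarith

lemma Box_ne_top (hfc : MeasureTheory.IsFiniteMeasureOnCompacts lam) {a b : ℝ}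
    (ha : 0 ≤ a) (hb : 0 ≤ b) : lam (G n A (Box a b)) ≠ ⊤ := by
  refine lam_G_finite lam hfc (M := max a b) (le_trans ha (le_max_left _ _)) ?_
  rintro ⟨p1, p2⟩ ⟨_, h2, _, h4⟩ _ _
  exact ⟨le_trans h2 (le_max_left _ _), le_trans h4 (le_max_right _ _)⟩

lemma Sh_ne_top (hfc : MeasureTheory.IsFiniteMeasureOnCompacts lam) (ε : ℝ) :
    lam (G n A (Sh c ε)) ≠ ⊤ := by
  refine lam_G_finite lam hfc (M := max (Real.exp 1) (c^2)) ?_ ?_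
  · exact le_trans (Real.exp_nonneg 1) (le_max_left _ _)
  · rintro ⟨p1, p2⟩ ⟨h1, h2, _, h4, h5⟩ _ _
    dsimp only at *
    constructor
    · exact le_trans h2.le (le_max_left _ _)
    · refine le_trans ?_ (le_max_right _ _)
      nlinarith

lemma ash_tendsto (hA : MeasurableSet A)
    (hfc : MeasureTheory.IsFiniteMeasureOnCompacts lam) :
    Tendsto (fun k : ℕ => lam (G n A (Sh c (c^4 * Real.exp (-2 * (k:ℝ)))))) atTop (𝓝 0) := by
  have hδanti : ∀ {k k' : ℕ}, k ≤ k' →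
      c^4 * Real.exp (-2 * (k':ℝ)) ≤ c^4 * Real.exp (-2 * (k:ℝ)) := by
    intro k k' h
    have : ((k:ℝ)) ≤ (k':ℝ) := by exact_mod_cast h
    have := Real.exp_le_exp.mpr (show (-2) * (k':ℝ) ≤ -2 * (k:ℝ) by linarith)
    nlinarith [sq_nonneg (c^2)]
  have hanti : Antitone (fun k : ℕ => G n A (Sh c (c^4 * Real.exp (-2 * (k:ℝ))))) := by
    intro k k' h
    apply G_mono
    rintro ⟨p1, p2⟩ ⟨h1, h2, h3, h4, h5⟩
    exact ⟨h1, h2, le_trans (by linarith [hδanti h]) h3, h4, h5⟩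
  have hδ0 : Tendsto (fun k : ℕ => c^4 * Real.exp (-2 * (k:ℝ))) atTop (𝓝 0) := by
    have h1 : Tendsto (fun k : ℕ => (Real.exp (-2))^k) atTop (𝓝 0) :=
      tendsto_pow_atTop_nhds_zero_of_lt_one (Real.exp_nonneg _)
        (Real.exp_lt_one_iff.mpr (by norm_num))
    have h2 := h1.const_mul (c^4)
    rw [mul_zero] at h2
    refine h2.congr fun k => ?_
    rw [← Real.exp_nat_mul]
    ring_nf
  have hempty : (⋂ k : ℕ, G n A (Sh c (c^4 * Real.exp (-2 * (k:ℝ))))) = ∅ := by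
    ext x
    simp only [Set.mem_iInter, Set.mem_empty_iff_false, iff_false, not_forall]
    by_contra hcon
    push_neg at hcon
    obtain ⟨_, _, _, _, _, hlt, _⟩ := hcon 0
    have hpos : 0 < c^2 - uu n x * vv n x := by linarith
    obtain ⟨k, hk⟩ := (hδ0.eventually_lt_const hpos).exists
    obtain ⟨_, _, _, _, hge, _, _⟩ := hcon k
    linarith
  have := tendsto_measure_iInter_atTop (μ := lam)
    (fun k => (G_meas hA (Sh_meas c _)).nullMeasurableSet) hanti
    ⟨0, Sh_ne_top lam hfc _⟩
  rw [hempty, measure_empty] at this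
  exact this

lemma upper_bound (hinv : ∀ t : ℝ, MeasureTheory.Measure.map (gmap n t) lam = lam)
    (hA : MeasurableSet A) (hc : 0 < c) {T : ℝ} (hT : 1 ≤ T) :
    lam (EsetA n T c A) ≤ ((⌊T⌋₊ : ℝ≥0∞) + 1) * lam (G n A (sl c 1 (Real.exp 1)))
      + (lam (G n A (Box 1 c)) + lam (G n A (Box 2 (c^2)))) := by
  rw [EsetA_eq]
  calc lam (G n A (sE c T))
      ≤ lam (G n A ((sl c 1 (Real.exp T) ∪ Box 1 c) ∪ scale T (Box 2 (c^2)))) :=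
        measure_mono (G_subset_of_Q (incl_E hc hT))
    _ ≤ lam (G n A (sl c 1 (Real.exp T) ∪ Box 1 c)) + lam (G n A (scale T (Box 2 (c^2)))) := by
        rw [G_union]; exact measure_union_le _ _
    _ ≤ lam (G n A (sl c 1 (Real.exp T))) + lam (G n A (Box 1 c))
          + lam (G n A (scale T (Box 2 (c^2)))) := by
        gcongr
        rw [G_union]; exact measure_union_le _ _
    _ = lam (G n A (sl c 1 (Real.exp T))) + lam (G n A (Box 1 c))
          + lam (G n A (Box 2 (c^2))) := by
        rw [lam_G_scale lam hinv hA _ (Box_meas 2 (c^2))]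
    _ ≤ ((⌊T⌋₊ : ℝ≥0∞) + 1) * lam (G n A (sl c 1 (Real.exp 1)))
          + (lam (G n A (Box 1 c)) + lam (G n A (Box 2 (c^2)))) := by
        rw [add_assoc]
        gcongr
        have hsub : sl c 1 (Real.exp T) ⊆ sl c 1 (Real.exp ((⌊T⌋₊ + 1 : ℕ) : ℝ)) := by
          rintro ⟨p1, p2⟩ ⟨h1, h2, h3⟩
          refine ⟨h1, h2, lt_of_lt_of_le h3 (Real.exp_le_exp.mpr ?_)⟩
          push_cast
          exact le_of_lt (Nat.lt_floor_add_one T)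
        calc lam (G n A (sl c 1 (Real.exp T)))
            ≤ lam (G n A (sl c 1 (Real.exp ((⌊T⌋₊ + 1 : ℕ) : ℝ)))) :=
              measure_mono (G_mono hsub)
          _ = ((⌊T⌋₊ + 1 : ℕ) : ℝ≥0∞) * lam (G n A (sl c 1 (Real.exp 1))) :=
              lam_sl lam hinv hA _
          _ = ((⌊T⌋₊ : ℝ≥0∞) + 1) * lam (G n A (sl c 1 (Real.exp 1))) := by push_cast; ring

lemma G_biUnion (I : Finset ℕ) (s : ℕ → Set (ℝ × ℝ)) :
    G n A (⋃ k ∈ I, s k) = ⋃ k ∈ I, G n A (s k) := by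
  ext x
  simp only [G, Set.mem_setOf_eq, Set.mem_iUnion]
  constructor
  · rintro ⟨h1, h2, h3, k, hk, h4⟩
    exact ⟨k, hk, h1, h2, h3, h4⟩
  · rintro ⟨k, hk, h1, h2, h3, h4⟩
    exact ⟨h1, h2, h3, k, hk, h4⟩

lemma lower_bound (hinv : ∀ t : ℝ, MeasureTheory.Measure.map (gmap n t) lam = lam)
    (hA : MeasurableSet A) (hc : 0 < c) {T : ℝ} (hT : 1 ≤ T) (hT2 : 2 * c^2 ≤ Real.exp T) :
    (⌊T⌋₊ : ℝ≥0∞) * lam (G n A (sl c 1 (Real.exp 1)))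
      ≤ lam (EsetA n T c A) + (lam (G n A (Box 2 2)) + lam (G n A (Box 1 (2 * c^2))))
        + ∑ k ∈ Finset.range (⌊T⌋₊ + 1), lam (G n A (Sh c (c^4 * Real.exp (-2 * (k:ℝ))))) := by
  rw [EsetA_eq]
  have step1 : (⌊T⌋₊ : ℝ≥0∞) * lam (G n A (sl c 1 (Real.exp 1)))
      ≤ lam (G n A (sl c 1 (Real.exp T))) := by
    rw [← lam_sl lam hinv hA ⌊T⌋₊]
    apply measure_mono
    apply G_mono
    rintro ⟨p1, p2⟩ ⟨h1, h2, h3⟩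
    refine ⟨h1, h2, lt_of_lt_of_le h3 (Real.exp_le_exp.mpr (Nat.floor_le (by linarith)))⟩
  refine le_trans step1 ?_
  calc lam (G n A (sl c 1 (Real.exp T)))
      ≤ lam (G n A (((sE c T ∪ Box 2 2) ∪ scale T (Box 1 (2 * c^2))) ∪
          ⋃ k ∈ Finset.range (⌊T⌋₊ + 1), scale (k:ℝ) (Sh c (c^4 * Real.exp (-2 * (k:ℝ)))))) :=
        measure_mono (G_subset_of_Q (incl_F hc hT hT2))
    _ ≤ lam (G n A ((sE c T ∪ Box 2 2) ∪ scale T (Box 1 (2 * c^2))))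
        + lam (G n A (⋃ k ∈ Finset.range (⌊T⌋₊ + 1),
            scale (k:ℝ) (Sh c (c^4 * Real.exp (-2 * (k:ℝ)))))) := by
        rw [G_union]; exact measure_union_le _ _
    _ ≤ (lam (G n A (sE c T ∪ Box 2 2)) + lam (G n A (scale T (Box 1 (2 * c^2)))))
        + lam (G n A (⋃ k ∈ Finset.range (⌊T⌋₊ + 1),
            scale (k:ℝ) (Sh c (c^4 * Real.exp (-2 * (k:ℝ)))))) := by
        gcongr
        rw [G_union]; exact measure_union_le _ _
    _ ≤ ((lam (G n A (sE c T)) + lam (G n A (Box 2 2))) + lam (G n A (scale T (Box 1 (2 * c^2)))))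
        + lam (G n A (⋃ k ∈ Finset.range (⌊T⌋₊ + 1),
            scale (k:ℝ) (Sh c (c^4 * Real.exp (-2 * (k:ℝ)))))) := by
        gcongr
        rw [G_union]; exact measure_union_le _ _
    _ ≤ ((lam (G n A (sE c T)) + lam (G n A (Box 2 2))) + lam (G n A (Box 1 (2 * c^2))))
        + ∑ k ∈ Finset.range (⌊T⌋₊ + 1), lam (G n A (Sh c (c^4 * Real.exp (-2 * (k:ℝ))))) := by
        rw [lam_G_scale lam hinv hA _ (Box_meas 1 (2*c^2))]
        gcongr
        rw [G_biUnion]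
        refine le_trans (measure_biUnion_finset_le _ _) ?_
        apply Finset.sum_le_sum
        intro k _
        rw [lam_G_scale lam hinv hA _ (Sh_meas c _)]
    _ = lam (G n A (sE c T)) + (lam (G n A (Box 2 2)) + lam (G n A (Box 1 (2 * c^2))))
        + ∑ k ∈ Finset.range (⌊T⌋₊ + 1), lam (G n A (Sh c (c^4 * Real.exp (-2 * (k:ℝ))))) := by
        ring

end LA4
/-- **Section 3.3**: `λ(E_{T,c,A})/T → λ(F_{1,c,A})` as `T → ∞`. -/
theorem EsetA_volume_asymptotics (n : ℕ) (hn : 1 ≤ n)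
    (lam : Measure (EuclideanSpace ℝ (Fin (n + 2))))
    (hinv : ∀ t : ℝ, Measure.map (gmap n t) lam = lam)
    (hfc : IsFiniteMeasureOnCompacts lam)
    (c : ℝ) (hc : 0 < c)
    (A : Set ↑(sphere (0 : EuclideanSpace ℝ (Fin n)) 1)) (hA : MeasurableSet A) :
    Tendsto (fun T : ℝ => lam (EsetA n T c A) / ENNReal.ofReal T) atTop
      (𝓝 (lam (FsetA n 1 c A))) := by
  classical
  set L : ℝ≥0∞ := lam (LA2.G n A (LA3.sl c 1 (Real.exp 1))) with hL
  have hLtop : L ≠ ⊤ := LA4.L_ne_top lam hc hfc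
  set CE1 : ℝ≥0∞ := lam (LA2.G n A (LA3.Box 1 c)) with hCE1
  set CE2 : ℝ≥0∞ := lam (LA2.G n A (LA3.Box 2 (c^2))) with hCE2
  set CF1 : ℝ≥0∞ := lam (LA2.G n A (LA3.Box 2 2)) with hCF1
  set CF2 : ℝ≥0∞ := lam (LA2.G n A (LA3.Box 1 (2 * c^2))) with hCF2
  have hCE1top : CE1 ≠ ⊤ := LA4.Box_ne_top lam hfc zero_le_one hc.le
  have hCE2top : CE2 ≠ ⊤ := LA4.Box_ne_top lam hfc zero_le_two (sq_nonneg c)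
  have hCF1top : CF1 ≠ ⊤ := LA4.Box_ne_top lam hfc zero_le_two zero_le_two
  have hCF2top : CF2 ≠ ⊤ := LA4.Box_ne_top lam hfc zero_le_one (by positivity)
  set ash : ℕ → ℝ≥0∞ :=
    fun k => lam (LA2.G n A (LA3.Sh c (c^4 * Real.exp (-2 * (k:ℝ))))) with hash
  have hashtop : ∀ k, ash k ≠ ⊤ := fun k => LA4.Sh_ne_top lam hfc _
  have hashtend : Tendsto ash atTop (𝓝 0) := LA4.ash_tendsto lam hA hfc
  set ℓ : ℝ := L.toReal with hℓ
  set ce : ℝ := CE1.toReal + CE2.toReal with hce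
  set cf : ℝ := CF1.toReal + CF2.toReal with hcf
  set r : ℕ → ℝ := fun k => (ash k).toReal with hr
  have hr0 : ∀ k, 0 ≤ r k := fun k => ENNReal.toReal_nonneg
  set sg : ℕ → ℝ := fun m => ∑ k ∈ Finset.range (m + 1), r k with hsg
  have hsg0 : ∀ m, 0 ≤ sg m := fun m => Finset.sum_nonneg fun k _ => hr0 k
  have hEfin : ∀ T : ℝ, 1 ≤ T → lam (EsetA n T c A) ≠ ⊤ := by
    intro T hT
    refine ne_top_of_le_ne_top ?_ (LA4.upper_bound lam hinv hA hc hT)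
    exact ENNReal.add_ne_top.mpr
      ⟨ENNReal.mul_ne_top (by simp) hLtop, ENNReal.add_ne_top.mpr ⟨hCE1top, hCE2top⟩⟩
  set e : ℝ → ℝ := fun T => (lam (EsetA n T c A)).toReal with he
  -- real upper bound
  have hUB : ∀ T : ℝ, 1 ≤ T → e T ≤ ((⌊T⌋₊ : ℝ) + 1) * ℓ + ce := by
    intro T hT
    have h1 := LA4.upper_bound lam hinv hA hc (c := c) (A := A) hT
    have h2 := ENNReal.toReal_mono (b := ((⌊T⌋₊ : ℝ≥0∞) + 1) * L + (CE1 + CE2))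
      (ENNReal.add_ne_top.mpr
        ⟨ENNReal.mul_ne_top (by simp) hLtop, ENNReal.add_ne_top.mpr ⟨hCE1top, hCE2top⟩⟩) h1
    rw [ENNReal.toReal_add (ENNReal.mul_ne_top (by simp) hLtop)
        (ENNReal.add_ne_top.mpr ⟨hCE1top, hCE2top⟩), ENNReal.toReal_mul,
      ENNReal.toReal_add hCE1top hCE2top] at h2
    have h3 : ((⌊T⌋₊ : ℝ≥0∞) + 1).toReal = (⌊T⌋₊ : ℝ) + 1 := by
      rw [ENNReal.toReal_add (by simp) (by simp)]
      simp
    rw [h3] at h2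
    exact h2
  -- real lower bound
  have hLB : ∀ T : ℝ, 1 ≤ T → 2 * c^2 ≤ Real.exp T →
      (⌊T⌋₊ : ℝ) * ℓ ≤ e T + cf + sg ⌊T⌋₊ := by
    intro T hT hT2
    have h1 := LA4.lower_bound lam hinv hA hc (c := c) (A := A) hT hT2
    have hsum_ne : (∑ k ∈ Finset.range (⌊T⌋₊ + 1), ash k) ≠ ⊤ :=
      (ENNReal.sum_lt_top.mpr fun k _ => lt_top_iff_ne_top.mpr (hashtop k)).ne
    have hRtop : lam (EsetA n T c A) + (CF1 + CF2)
        + ∑ k ∈ Finset.range (⌊T⌋₊ + 1), ash k ≠ ⊤ :=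
      ENNReal.add_ne_top.mpr ⟨ENNReal.add_ne_top.mpr
        ⟨hEfin T hT, ENNReal.add_ne_top.mpr ⟨hCF1top, hCF2top⟩⟩, hsum_ne⟩
    have h2 := ENNReal.toReal_mono hRtop h1
    rw [ENNReal.toReal_mul,
      ENNReal.toReal_add (ENNReal.add_ne_top.mpr
        ⟨hEfin T hT, ENNReal.add_ne_top.mpr ⟨hCF1top, hCF2top⟩⟩) hsum_ne,
      ENNReal.toReal_add (hEfin T hT) (ENNReal.add_ne_top.mpr ⟨hCF1top, hCF2top⟩),
      ENNReal.toReal_add hCF1top hCF2top,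
      ENNReal.toReal_sum (fun k _ => hashtop k)] at h2
    simpa using h2
  -- Cesàro
  have hrtend : Tendsto r atTop (𝓝 0) := by
    have h0 := (ENNReal.tendsto_toReal (a := 0) (by simp)).comp hashtend
    rw [ENNReal.toReal_zero] at h0
    exact h0
  have hces : Tendsto (fun N : ℕ => (N:ℝ)⁻¹ * ∑ i ∈ Finset.range N, r i) atTop (𝓝 0) :=
    hrtend.cesaro
  have hsgm : Tendsto (fun m : ℕ => sg m / (m:ℝ)) atTop (𝓝 0) := by
    have h1 : Tendsto (fun m : ℕ => ((m+1 : ℕ):ℝ)⁻¹ * ∑ i ∈ Finset.range (m+1), r i)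
        atTop (𝓝 0) := hces.comp (tendsto_add_atTop_nat 1)
    have h2 : Tendsto (fun m : ℕ => 1 + (m:ℝ)⁻¹) atTop (𝓝 (1 + 0)) :=
      tendsto_const_nhds.add tendsto_inv_atTop_nhds_zero_nat
    have h3 := h2.mul h1
    rw [mul_zero] at h3
    apply h3.congr'
    filter_upwards [eventually_ge_atTop 1] with m hm
    have hm0 : (0:ℝ) < (m:ℝ) := by exact_mod_cast hm
    have hm1 : ((m:ℝ)+1) ≠ 0 := by positivity
    rw [hsg]
    push_cast
    field_simp
  have hsgT : Tendsto (fun T : ℝ => sg ⌊T⌋₊ / T) atTop (𝓝 0) := by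
    have hcomp : Tendsto (fun T : ℝ => sg ⌊T⌋₊ / ((⌊T⌋₊:ℕ) : ℝ)) atTop (𝓝 0) :=
      hsgm.comp tendsto_nat_floor_atTop
    refine tendsto_of_tendsto_of_tendsto_of_le_of_le' tendsto_const_nhds hcomp ?_ ?_
    · filter_upwards [eventually_ge_atTop (1:ℝ)] with T hT
      have hT0 : (0:ℝ) < T := by linarith
      have := hsg0 ⌊T⌋₊
      positivity
    · filter_upwards [eventually_ge_atTop (1:ℝ)] with T hT
      have h1 : (1:ℕ) ≤ ⌊T⌋₊ := Nat.le_floor (by exact_mod_cast hT)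
      have h2 : (0:ℝ) < (⌊T⌋₊:ℝ) := by exact_mod_cast h1
      have h3 : (⌊T⌋₊:ℝ) ≤ T := Nat.floor_le (by linarith)
      exact div_le_div_of_nonneg_left (hsg0 _) h2 h3
  -- real limit
  have hreal : Tendsto (fun T : ℝ => e T / T) atTop (𝓝 ℓ) := by
    have hfl : Tendsto (fun T : ℝ => ((⌊T⌋₊:ℝ)) / T) atTop (𝓝 1) := tendsto_nat_floor_div_atTop
    have hinvT : Tendsto (fun T : ℝ => T⁻¹) atTop (𝓝 0) := tendsto_inv_atTop_zero
    have hg : Tendsto (fun T : ℝ => (⌊T⌋₊:ℝ)/T * ℓ - cf * T⁻¹ - sg ⌊T⌋₊ / T) atTop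
        (𝓝 (1 * ℓ - cf * 0 - 0)) :=
      ((hfl.mul_const ℓ).sub (hinvT.const_mul cf)).sub hsgT
    rw [show (1:ℝ) * ℓ - cf * 0 - 0 = ℓ by ring] at hg
    have hh : Tendsto (fun T : ℝ => ((⌊T⌋₊:ℝ)/T + T⁻¹) * ℓ + ce * T⁻¹) atTop
        (𝓝 ((1 + 0) * ℓ + ce * 0)) :=
      ((hfl.add hinvT).mul_const ℓ).add (hinvT.const_mul ce)
    rw [show ((1:ℝ) + 0) * ℓ + ce * 0 = ℓ by ring] at hh
    refine tendsto_of_tendsto_of_tendsto_of_le_of_le' hg hh ?_ ?_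
    · filter_upwards [eventually_ge_atTop (1:ℝ),
        eventually_ge_atTop (Real.log (2 * c^2) + 1)] with T hT1 hT2
      have hT0 : (0:ℝ) < T := by linarith
      have hexp : 2 * c^2 ≤ Real.exp T := by
        have h4 := Real.exp_le_exp.mpr (show Real.log (2 * c^2) ≤ T by linarith)
        rwa [Real.exp_log (by positivity)] at h4
      have h1 := hLB T hT1 hexp
      have heq : (⌊T⌋₊:ℝ)/T * ℓ - cf * T⁻¹ - sg ⌊T⌋₊ / T
          = ((⌊T⌋₊:ℝ) * ℓ - cf - sg ⌊T⌋₊) / T := by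
        field_simp
      rw [heq]
      exact (div_le_div_iff_of_pos_right hT0).mpr (by linarith)
    · filter_upwards [eventually_ge_atTop (1:ℝ)] with T hT1
      have hT0 : (0:ℝ) < T := by linarith
      have h1 := hUB T hT1
      have heq : ((⌊T⌋₊:ℝ)/T + T⁻¹) * ℓ + ce * T⁻¹ = (((⌊T⌋₊:ℝ) + 1) * ℓ + ce) / T := by
        field_simp
      rw [heq]
      exact (div_le_div_iff_of_pos_right hT0).mpr (by linarith)
  -- transfer to ℝ≥0∞
  have hkey := ENNReal.tendsto_ofReal hreal
  have hgoal_lim : lam (FsetA n 1 c A) = ENNReal.ofReal ℓ := by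
    rw [LA3.FsetA_eq (T := (1:ℝ)), hℓ, ENNReal.ofReal_toReal hLtop]
  rw [hgoal_lim]
  refine hkey.congr' ?_
  filter_upwards [eventually_ge_atTop (1:ℝ)] with T hT
  have hT0 : (0:ℝ) < T := by linarith
  rw [he]
  rw [ENNReal.ofReal_div_of_pos hT0, ENNReal.ofReal_toReal (hEfin T hT)]
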